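/- Let A be a real k × d matrix with Aᵀ * A invertible, let t₀ < 1 be real, let x₀ ∈ ℝ^d and y₁ ∈ ℝ^k. Define the path x(t) = x₀ + ((t − t₀)/(1 − t₀)) • ((Aᵀ * A)⁻¹ ⬝ᵥ (Aᵀ ⬝ᵥ (y₁ − A ⬝ᵥ x₀))). Then: (i) x(t₀) = x₀; (ii) for every t with t₀ ≤ t < 1, x has derivative (1/(1 − t)) • ((Aᵀ * A)⁻¹ ⬝ᵥ (Aᵀ ⬝ᵥ (y₁ − A ⬝ᵥ x(t)))) at t, so x solves the controlled dynamic dX_t = (AᵀA)⁻¹Aᵀ(y₁ − AX_t)/(1 − t) dt of Proposition 1; and (iii) the terminal state is x(1) = (Aᵀ * A)⁻¹ ⬝ᵥ (Aᵀ ⬝ᵥ y₁), independent of x₀. -/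

import Mathlib

open Matrix

/-- The path `x(t) = x₀ + ((t − t₀)/(1 − t₀)) • ((AᵀA)⁻¹Aᵀ(y₁ − Ax₀))` satisfies
`x(t₀) = x₀`, solves the controlled dynamic
`dX_t = (AᵀA)⁻¹Aᵀ(y₁ − AX_t)/(1 − t) dt` of Proposition 1 for `t₀ ≤ t < 1`,
and has terminal state `x(1) = (AᵀA)⁻¹Aᵀy₁`, independent of `x₀`. -/
theorem style_controlled_dynamic_solution {k d : ℕ} (A : Matrix (Fin k) (Fin d) ℝ)
    (hA : IsUnit (Aᵀ * A)) (t₀ : ℝ) (ht₀ : t₀ < 1) (x₀ : Fin d → ℝ) (y₁ : Fin k → ℝ)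
    (x : ℝ → (Fin d → ℝ))
    (hx : ∀ t, x t = x₀ + ((t - t₀) / (1 - t₀)) •
      ((Aᵀ * A)⁻¹.mulVec (Aᵀ.mulVec (y₁ - A.mulVec x₀)))) :
    x t₀ = x₀ ∧
    (∀ t : ℝ, t₀ ≤ t → t < 1 →
      HasDerivAt x ((1 - t)⁻¹ • ((Aᵀ * A)⁻¹.mulVec (Aᵀ.mulVec (y₁ - A.mulVec (x t))))) t) ∧
    x 1 = (Aᵀ * A)⁻¹.mulVec (Aᵀ.mulVec y₁) := by
  have hdet : IsUnit (Aᵀ * A).det := (Matrix.isUnit_iff_isUnit_det _).mp hA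
  have hinv : (Aᵀ * A)⁻¹ * (Aᵀ * A) = 1 := Matrix.nonsing_inv_mul _ hdet
  set v : Fin d → ℝ := (Aᵀ * A)⁻¹.mulVec (Aᵀ.mulVec (y₁ - A.mulVec x₀)) with hv
  have h0 : (1 : ℝ) - t₀ ≠ 0 := ne_of_gt (by linarith)
  -- key: (AᵀA)⁻¹ Aᵀ A w = w
  have hkey : ∀ w : Fin d → ℝ, (Aᵀ * A)⁻¹.mulVec (Aᵀ.mulVec (A.mulVec w)) = w := by
    intro w
    rw [Matrix.mulVec_mulVec, Matrix.mulVec_mulVec, Matrix.mul_assoc, hinv, Matrix.one_mulVec]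
  have hcontrol : ∀ t : ℝ,
      (Aᵀ * A)⁻¹.mulVec (Aᵀ.mulVec (y₁ - A.mulVec (x t))) = ((1 - t) / (1 - t₀)) • v := by
    intro t
    rw [hx t, Matrix.mulVec_add, Matrix.mulVec_smul]
    have : y₁ - (A.mulVec x₀ + ((t - t₀) / (1 - t₀)) • A.mulVec v)
        = (y₁ - A.mulVec x₀) - ((t - t₀) / (1 - t₀)) • A.mulVec v := by
      abel
    rw [this, Matrix.mulVec_sub, Matrix.mulVec_smul, Matrix.mulVec_sub, Matrix.mulVec_smul,
      hkey v, ← hv]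
    nth_rewrite 1 [← one_smul ℝ v]
    rw [← sub_smul]
    congr 1
    field_simp
    ring
  refine ⟨?_, ?_, ?_⟩
  · rw [hx t₀]
    simp
  · intro t ht₀t ht1
    have h1 : (1 : ℝ) - t ≠ 0 := ne_of_gt (by linarith)
    have hd : HasDerivAt x ((1 - t₀)⁻¹ • v) t := by
      have : HasDerivAt (fun t : ℝ => x₀ + ((t - t₀) / (1 - t₀)) • v) ((1 - t₀)⁻¹ • v) t := by
        have h2 : HasDerivAt (fun t : ℝ => (t - t₀) / (1 - t₀)) ((1 - t₀)⁻¹) t := by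
          simpa using ((hasDerivAt_id t).sub_const t₀).div_const (1 - t₀)
        simpa using (h2.smul_const v).const_add x₀
      exact this.congr_of_eventuallyEq (Filter.Eventually.of_forall fun s => (hx s))
    convert hd using 1
    rw [hcontrol t, smul_smul]
    congr 1
    field_simp
  · rw [hx 1, div_self h0, one_smul, hv, Matrix.mulVec_sub, Matrix.mulVec_sub,
      hkey x₀]
    abel
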